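/- Let (E, ℋ) be a Steiner system of type (5,6,12) and let M be its associated matroid of rank 6, whose bases are the 6-element subsets of E contained in no block. Then P_M(t) = 1 + 120t + 429t². -/

import Mathlib

open Polynomial Matroid

namespace KLPaper

variable {α : Type} [Fintype α]

/-- The contraction `M ⧸ C` of a set `C` in a matroid `M`, defined (as is standard,
see e.g. Oxley, Prop. 3.1.1) as the dual of the deletion of `C` from the dual matroid,
where deletion of `C` is restriction to `M.E \ C`.  Its ground set is `M.E \ C`. -/
noncomputable def contract (M : Matroid α) (C : Set α) : Matroid α :=
  (M✶ ↾ (M.E \ C))✶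

scoped infixl:75 " ⧸ " => KLPaper.contract

/-- The rank `rk M S` of a set `S` in a matroid `M`: the largest cardinality of an
independent subset of `S`. -/
noncomputable def rk (M : Matroid α) (S : Set α) : ℕ :=
  sSup {n | ∃ I, I ⊆ S ∧ M.Indep I ∧ I.ncard = n}

/-- The rank of a matroid: the rank of its ground set. -/
noncomputable def rank (M : Matroid α) : ℕ := rk M M.E

/-- A circuit of a matroid: a minimal dependent set, i.e. a dependent subset of the
ground set all of whose proper subsets are independent. -/
def IsCircuit (M : Matroid α) (C : Set α) : Prop :=
  M.Dep C ∧ ∀ D ⊂ C, M.Indep D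

/-- A hyperplane of a matroid: a maximal proper flat. -/
def IsHyperplane (M : Matroid α) (H : Set α) : Prop :=
  M.IsFlat H ∧ H ≠ M.E ∧ ∀ F, M.IsFlat F → H ⊂ F → F = M.E

/-- A stressed hyperplane of a matroid `M` of rank `k`: a hyperplane `H` such that every
`k`-element subset of `H` is a circuit of `M`. -/
def Stressed (M : Matroid α) (H : Set α) : Prop :=
  IsHyperplane M H ∧ ∀ C ⊆ H, C.ncard = rank M → IsCircuit M C

/-- `Mt` is the relaxation of `M` at the stressed hyperplane `H`: the matroid on the same
ground set whose bases are exactly the bases of `M` together with all `(rank M)`-element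
subsets of `H`. -/
def IsRelaxation (M Mt : Matroid α) (H : Set α) : Prop :=
  Mt.E = M.E ∧ ∀ B : Set α, Mt.IsBase B ↔ (M.IsBase B ∨ (B ⊆ H ∧ B.ncard = rank M))

/-- The characterization of the Kazhdan–Lusztig polynomials `P_M` and the `Z`-polynomials
`Z_M` of matroids (on a fixed finite type): (i) both equal `1` on matroids with empty
ground set; (ii) `2 · deg P_M < rk M` when the ground set is nonempty (the zero
polynomial being allowed); (iii) `Z_M` is palindromic of degree `rk M`;
(iv) `Z_M = Σ_{S ⊆ E} t^{rk S} · P_{M ⧸ S}`, the sum over all subsets `S` of `E`. -/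
def PZaxioms (P Z : Matroid α → Polynomial ℤ) : Prop :=
  (∀ M : Matroid α, M.E = ∅ → P M = 1 ∧ Z M = 1) ∧
  (∀ M : Matroid α, M.E ≠ ∅ → (P M = 0 ∨ 2 * (P M).natDegree < rank M)) ∧
  (∀ M : Matroid α, (Z M).natDegree ≤ rank M ∧
      ∀ i ≤ rank M, (Z M).coeff i = (Z M).coeff (rank M - i)) ∧
  (∀ M : Matroid α,
      Z M = ∑ S ∈ M.E.toFinite.toFinset.powerset,
        X ^ (rk M (S : Set α)) * P (M ⧸ (S : Set α)))

set_option linter.unusedSectionVars false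
set_option maxHeartbeats 1000000

section Rk

variable {M : Matroid α} {X I : Set α} {n : ℕ}

lemma ncard_diff_add_inter (A B : Set α) : (A \ B).ncard + (A ∩ B).ncard = A.ncard := by
  rw [← Set.diff_self_inter]
  exact Set.ncard_diff_add_ncard_of_subset Set.inter_subset_left A.toFinite

lemma rkSet_nonempty (M : Matroid α) (X : Set α) :
    {n | ∃ I, I ⊆ X ∧ M.Indep I ∧ I.ncard = n}.Nonempty :=
  ⟨0, ∅, by simp⟩

lemma rkSet_bddAbove (M : Matroid α) (X : Set α) :
    BddAbove {n | ∃ I, I ⊆ X ∧ M.Indep I ∧ I.ncard = n} := by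
  refine ⟨Fintype.card α, ?_⟩
  rintro n ⟨I, -, -, rfl⟩
  simpa [Set.ncard_univ, Nat.card_eq_fintype_card] using
    Set.ncard_le_ncard (Set.subset_univ I) Set.finite_univ

lemma exists_rk_witness (M : Matroid α) (X : Set α) :
    ∃ I, I ⊆ X ∧ M.Indep I ∧ I.ncard = rk M X :=
  Nat.sSup_mem (rkSet_nonempty M X) (rkSet_bddAbove M X)

lemma ncard_le_rk (hIX : I ⊆ X) (hI : M.Indep I) : I.ncard ≤ rk M X :=
  le_csSup (rkSet_bddAbove M X) ⟨I, hIX, hI, rfl⟩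

lemma rk_le (h : ∀ I, I ⊆ X → M.Indep I → I.ncard ≤ n) : rk M X ≤ n := by
  refine csSup_le (rkSet_nonempty M X) ?_
  rintro m ⟨I, hIX, hI, rfl⟩
  exact h I hIX hI

lemma rk_eq_of (h1 : I ⊆ X) (h2 : M.Indep I)
    (h3 : ∀ J, J ⊆ X → M.Indep J → J.ncard ≤ I.ncard) : rk M X = I.ncard :=
  le_antisymm (rk_le h3) (ncard_le_rk h1 h2)

lemma rank_eq_card_base {B : Set α} (hB : M.IsBase B) : rank M = B.ncard := by
  refine rk_eq_of hB.subset_ground hB.indep fun J hJE hJ => ?_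
  obtain ⟨B', hB', hJB'⟩ := hJ.exists_isBase_superset
  exact (Set.ncard_le_ncard hJB' B'.toFinite).trans (hB'.ncard_eq_ncard_of_isBase hB).le

lemma rk_mono {Y : Set α} (hXY : X ⊆ Y) : rk M X ≤ rk M Y := by
  obtain ⟨I, hIX, hI, hcard⟩ := exists_rk_witness M X
  rw [← hcard]; exact ncard_le_rk (hIX.trans hXY) hI

lemma rk_le_ncard (X : Set α) : rk M X ≤ X.ncard :=
  rk_le fun I hIX _ => Set.ncard_le_ncard hIX X.toFinite

lemma rk_empty (M : Matroid α) : rk M ∅ = 0 := by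
  have h := rk_le_ncard (M := M) ∅
  simpa using h

lemma rk_eq_ncard_of_indep (hI : M.Indep I) : rk M I = I.ncard :=
  rk_eq_of subset_rfl hI fun J hJ _ => Set.ncard_le_ncard hJ I.toFinite

/-- The dual rank formula, in additive form. -/
lemma rk_dual_add (hX : X ⊆ M.E) :
    rk M✶ X + rank M = X.ncard + rk M (M.E \ X) := by
  apply le_antisymm
  · obtain ⟨I, hIX, hI, hIcard⟩ := exists_rk_witness M✶ X
    rw [← hIcard]
    obtain ⟨hIE, B, hB, hdisj⟩ := (dual_indep_iff_exists').mp hI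
    have h1 : (B \ X).ncard ≤ rk M (M.E \ X) :=
      ncard_le_rk (Set.diff_subset_diff_left hB.subset_ground) (hB.indep.subset Set.diff_subset)
    have hdisj2 : Disjoint (B ∩ X) I := (hdisj.mono_right Set.inter_subset_left).symm
    have h2 : (B ∩ X).ncard + I.ncard ≤ X.ncard := by
      have hu := Set.ncard_le_ncard (show (B ∩ X) ∪ I ⊆ X from
        Set.union_subset Set.inter_subset_right hIX) X.toFinite
      rwa [Set.ncard_union_eq hdisj2 (Set.toFinite _) (Set.toFinite _)] at hu
    have h3 := ncard_diff_add_inter B X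
    rw [rank_eq_card_base hB]
    omega
  · obtain ⟨J, hJX, hJ, hJcard⟩ := exists_rk_witness M (M.E \ X)
    obtain ⟨B, hB, hJB⟩ := hJ.exists_isBase_superset
    have hBXle : (B \ X).ncard ≤ J.ncard := by
      rw [hJcard]
      exact ncard_le_rk (Set.diff_subset_diff_left hB.subset_ground) (hB.indep.subset Set.diff_subset)
    have hJBX : J ⊆ B \ X := Set.subset_diff.mpr ⟨hJB, (Set.subset_diff.mp hJX).2⟩
    have hBXeq : (B \ X).ncard = J.ncard :=
      le_antisymm hBXle (Set.ncard_le_ncard hJBX (Set.toFinite _))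
    have hXB : M✶.Indep (X \ B) := by
      rw [dual_indep_iff_exists']
      exact ⟨Set.diff_subset.trans hX, B, hB, Set.disjoint_sdiff_left⟩
    have h1 : (X \ B).ncard ≤ rk M✶ X := ncard_le_rk Set.diff_subset hXB
    have h2 := ncard_diff_add_inter X B
    have h3 := ncard_diff_add_inter B X
    have h4 : (X ∩ B).ncard = (B ∩ X).ncard := by rw [Set.inter_comm]
    rw [rank_eq_card_base hB]
    omega

lemma rk_restrict {R : Set α} (hXR : X ⊆ R) : rk (M ↾ R) X = rk M X := by
  unfold rk
  congr 1
  ext n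
  constructor
  · rintro ⟨I, hIX, hI, rfl⟩
    exact ⟨I, hIX, ((M.restrict_indep_iff).mp hI).1, rfl⟩
  · rintro ⟨I, hIX, hI, rfl⟩
    exact ⟨I, hIX, (M.restrict_indep_iff).mpr ⟨hI, hIX.trans hXR⟩, rfl⟩

end Rk

section Contract

variable {M : Matroid α} {C D T : Set α}

@[simp] lemma contract_ground (M : Matroid α) (C : Set α) : (contract M C).E = M.E \ C := rfl

lemma contract_contract (M : Matroid α) (C D : Set α) :
    contract (contract M C) D = contract M (C ∪ D) := by
  unfold contract
  rw [dual_dual, show ((M✶ ↾ (M.E \ C))✶).E = M.E \ C from rfl]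
  rw [show (M.E \ C) \ D = M.E \ (C ∪ D) from by rw [Set.diff_diff]]
  rw [Matroid.restrict_restrict_eq _ (Set.diff_subset_diff_right Set.subset_union_left)]

lemma contract_empty (M : Matroid α) : contract M (∅ : Set α) = M := by
  unfold contract
  rw [Set.diff_empty, ← dual_ground, Matroid.restrict_ground_eq_self, dual_dual]

/-- Rank formula for contractions. -/
lemma rk_contract (hC : C ⊆ M.E) (hT : T ⊆ M.E \ C) :
    rk (contract M C) T + rk M C = rk M (C ∪ T) := by
  set R := M.E \ C with hR
  have hTR : T ⊆ R := hT
  have hRE : R ⊆ M.E := Set.diff_subset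
  have hTE : T ⊆ M.E := hTR.trans hRE
  have h1 : rk ((M✶ ↾ R)✶) T + rank (M✶ ↾ R) = T.ncard + rk (M✶ ↾ R) (R \ T) := by
    have h := rk_dual_add (M := M✶ ↾ R) (X := T) (by simpa using hTR)
    simpa using h
  have e1 : rank (M✶ ↾ R) = rk M✶ R := by
    show rk (M✶ ↾ R) (M✶ ↾ R).E = _
    rw [Matroid.restrict_ground_eq, rk_restrict subset_rfl]
  have e2 : rk (M✶ ↾ R) (R \ T) = rk M✶ (R \ T) := rk_restrict Set.diff_subset
  have h2 : rk M✶ R + rank M = R.ncard + rk M C := by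
    have h := rk_dual_add (M := M) (X := R) hRE
    rwa [Set.diff_diff_cancel_left hC] at h
  have h3 : rk M✶ (R \ T) + rank M = (R \ T).ncard + rk M (C ∪ T) := by
    have h := rk_dual_add (M := M) (X := R \ T) (Set.diff_subset.trans hRE)
    rwa [show M.E \ (R \ T) = C ∪ T from by
      rw [hR, Set.diff_diff_right, Set.diff_diff_cancel_left hC,
        Set.inter_eq_self_of_subset_right hTE]] at h
  have h4 : (R \ T).ncard + T.ncard = R.ncard := Set.ncard_diff_add_ncard_of_subset hTR R.toFinite
  have hc : contract M C = (M✶ ↾ R)✶ := rfl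
  rw [hc]
  omega

lemma rank_contract_add (hC : C ⊆ M.E) : rank (contract M C) + rk M C = rank M := by
  have h := rk_contract (M := M) (C := C) (T := M.E \ C) hC subset_rfl
  rwa [Set.union_diff_cancel hC] at h

end Contract


/-- Bundled hypotheses of the Steiner (5,6,12) system situation. -/
structure St (β : Type) [Fintype β] where
  E : Set β
  Blocks : Set (Set β)
  M : Matroid β
  hEcard : E.ncard = 12
  hBlocks : ∀ Bl ∈ Blocks, Bl ⊆ E ∧ Bl.ncard = 6
  hSteiner : ∀ D ⊆ E, D.ncard = 5 → ∃! Bl, Bl ∈ Blocks ∧ D ⊆ Bl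
  hME : M.E = E
  hMB : ∀ B : Set β, M.IsBase B ↔ B ⊆ E ∧ B.ncard = 6 ∧ ∀ Bl ∈ Blocks, ¬B ⊆ Bl

namespace St

variable {β : Type} [Fintype β] (s : St β)

lemma exists_isBase_superset_small {A : Set β} (hA : A ⊆ s.E) (h5 : A.ncard ≤ 5) :
    ∃ B, s.M.IsBase B ∧ A ⊆ B := by
  obtain ⟨D, hAD, hDE, hD5⟩ :=
    Set.exists_subsuperset_card_eq hA h5 (by rw [s.hEcard]; norm_num)
  obtain ⟨Bl, ⟨hBl, hDBl⟩, huniq⟩ := s.hSteiner D hDE hD5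
  have hBlE := (s.hBlocks Bl hBl).1
  have hBlcard := (s.hBlocks Bl hBl).2
  have hEBl : (s.E \ Bl).Nonempty := by
    rw [← Set.ncard_pos (s.E \ Bl).toFinite, Set.ncard_diff hBlE Bl.toFinite, s.hEcard, hBlcard]
    norm_num
  obtain ⟨e, heE, heBl⟩ := hEBl
  have heD : e ∉ D := fun h => heBl (hDBl h)
  refine ⟨insert e D, ?_, hAD.trans (Set.subset_insert e D)⟩
  rw [s.hMB]
  refine ⟨Set.insert_subset heE hDE, ?_, ?_⟩
  · rw [Set.ncard_insert_of_notMem heD D.toFinite, hD5]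
  · intro Bl' hBl' hsub
    have : Bl' = Bl := huniq Bl' ⟨hBl', (Set.subset_insert e D).trans hsub⟩
    exact heBl (this ▸ hsub (Set.mem_insert e D))

lemma indep_of_small {A : Set β} (hA : A ⊆ s.E) (h5 : A.ncard ≤ 5) : s.M.Indep A := by
  obtain ⟨B, hB, hAB⟩ := s.exists_isBase_superset_small hA h5
  exact hB.indep.subset hAB

lemma indep_six {A : Set β} (hA : A ⊆ s.E) (h6 : A.ncard = 6) (hAB : A ∉ s.Blocks) :
    s.M.Indep A := by
  refine Matroid.IsBase.indep ?_
  rw [s.hMB]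
  refine ⟨hA, h6, fun Bl hBl hsub => ?_⟩
  have hBlcard := (s.hBlocks Bl hBl).2
  have : A = Bl := Set.eq_of_subset_of_ncard_le hsub (by omega) Bl.toFinite
  exact hAB (this ▸ hBl)

lemma indep_card_le {I : Set β} (hI : s.M.Indep I) : I.ncard ≤ 6 := by
  obtain ⟨B, hB, hIB⟩ := hI.exists_isBase_superset
  have := ((s.hMB B).mp hB).2.1
  exact (Set.ncard_le_ncard hIB B.toFinite).trans this.le

lemma block_not_indep {Bl : Set β} (hBl : Bl ∈ s.Blocks) : ¬s.M.Indep Bl := by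
  intro hI
  obtain ⟨B, hB, hIB⟩ := hI.exists_isBase_superset
  obtain ⟨hBE, hB6, hBnb⟩ := (s.hMB B).mp hB
  have hBlcard := (s.hBlocks Bl hBl).2
  have : Bl = B := Set.eq_of_subset_of_ncard_le hIB (by omega) B.toFinite
  exact hBnb Bl hBl (this ▸ subset_rfl)

lemma rk_small {A : Set β} (hA : A ⊆ s.E) (h5 : A.ncard ≤ 5) : rk s.M A = A.ncard :=
  rk_eq_ncard_of_indep (s.indep_of_small hA h5)

lemma rk_block {Bl : Set β} (hBl : Bl ∈ s.Blocks) : rk s.M Bl = 5 := by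
  obtain ⟨hBlE, hBl6⟩ := s.hBlocks Bl hBl
  apply le_antisymm
  · refine rk_le fun I hIBl hI => ?_
    by_contra h
    have h6 : I.ncard = 6 := le_antisymm (s.indep_card_le hI) (by omega)
    have : I = Bl := Set.eq_of_subset_of_ncard_le hIBl (by omega) Bl.toFinite
    exact s.block_not_indep hBl (this ▸ hI)
  · obtain ⟨A, hABl, hA5⟩ := Set.exists_subset_card_eq (s := Bl) (n := 5) (by omega)
    rw [← hA5]
    exact ncard_le_rk hABl (s.indep_of_small (hABl.trans hBlE) (by omega))

lemma rk_six_not_block {A : Set β} (hA : A ⊆ s.E) (h6 : A.ncard = 6) (hAB : A ∉ s.Blocks) :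
    rk s.M A = 6 := by
  rw [rk_eq_ncard_of_indep (s.indep_six hA h6 hAB), h6]

lemma rk_big {A : Set β} (hA : A ⊆ s.E) (h7 : 7 ≤ A.ncard) : rk s.M A = 6 := by
  apply le_antisymm
  · exact rk_le fun I _ hI => s.indep_card_le hI
  · obtain ⟨D, hDA, hD5⟩ := Set.exists_subset_card_eq (s := A) (n := 5) (by omega)
    obtain ⟨Bl, ⟨hBl, hDBl⟩, huniq⟩ := s.hSteiner D (hDA.trans hA) hD5
    obtain ⟨hBlE, hBl6⟩ := s.hBlocks Bl hBl
    have hABl : (A \ Bl).Nonempty := by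
      rw [← Set.ncard_pos (A \ Bl).toFinite]
      have := Set.ncard_le_ncard_diff_add_ncard A Bl Bl.toFinite
      omega
    obtain ⟨e, heA, heBl⟩ := hABl
    have heD : e ∉ D := fun h => heBl (hDBl h)
    have hcard : (insert e D).ncard = 6 := by
      rw [Set.ncard_insert_of_notMem heD D.toFinite, hD5]
    have hind : s.M.Indep (insert e D) := by
      refine s.indep_six (Set.insert_subset (hA heA) (hDA.trans hA)) hcard ?_
      intro hmem
      have : insert e D = Bl := huniq _ ⟨hmem, (Set.subset_insert e D)⟩
      exact heBl (this ▸ Set.mem_insert e D)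
    calc (6 : ℕ) = (insert e D).ncard := hcard.symm
    _ ≤ rk s.M A := ncard_le_rk (Set.insert_subset heA hDA) hind

lemma rank_M : rank s.M = 6 := by
  show rk s.M s.M.E = 6
  rw [s.hME]
  exact s.rk_big subset_rfl (by rw [s.hEcard]; norm_num)


variable {β : Type} [Fintype β] (s : St β) {S D : Set β}

attribute [local instance] Classical.propDecidable

/-- The set of blocks containing `S`. -/
def blocksThrough (s : St β) (S : Set β) : Set (Set β) := {Bl | Bl ∈ s.Blocks ∧ S ⊆ Bl}

/-- The unique block containing a given `5`-subset of `E`. -/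
noncomputable def theBlock (s : St β) (D : Set β) : Set β :=
  if h : D ⊆ s.E ∧ D.ncard = 5 then (s.hSteiner D h.1 h.2).choose else ∅

lemma theBlock_spec (hD : D ⊆ s.E) (h5 : D.ncard = 5) :
    s.theBlock D ∈ s.Blocks ∧ D ⊆ s.theBlock D := by
  rw [theBlock, dif_pos ⟨hD, h5⟩]
  exact (s.hSteiner D hD h5).choose_spec.1

lemma theBlock_eq (hD : D ⊆ s.E) (h5 : D.ncard = 5) {Bl : Set β}
    (hBl : Bl ∈ s.Blocks) (hDBl : D ⊆ Bl) : s.theBlock D = Bl := by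
  obtain ⟨h1, h2⟩ := s.theBlock_spec hD h5
  exact (s.hSteiner D hD h5).unique ⟨h1, h2⟩ ⟨hBl, hDBl⟩

lemma card_blocksThrough_mul (hS : S ⊆ s.E) (h5 : S.ncard ≤ 5) :
    (s.blocksThrough S).ncard * Nat.choose (6 - S.ncard) (5 - S.ncard)
      = Nat.choose (12 - S.ncard) (5 - S.ncard) := by
  classical
  set i := S.ncard with hi
  set A := (s.E \ S).toFinite.toFinset with hA
  set F5 := A.powersetCard (5 - i) with hF5
  set BT := (s.blocksThrough S).toFinite.toFinset with hBT
  have hdisj : ∀ {T : Finset β}, ↑T ⊆ s.E \ S → Disjoint S (↑T : Set β) := fun hT =>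
    (Set.disjoint_of_subset_right hT Set.disjoint_sdiff_right)
  have hunion : ∀ {T : Finset β}, ↑T ⊆ s.E \ S → T.card = 5 - i →
      (S ∪ ↑T) ⊆ s.E ∧ (S ∪ ↑T : Set β).ncard = 5 := by
    intro T hT hTc
    refine ⟨Set.union_subset hS (hT.trans Set.diff_subset), ?_⟩
    rw [Set.ncard_union_eq (hdisj hT) S.toFinite (T : Set β).toFinite,
      Set.ncard_coe_finset, hTc]
    omega
  have hmaps : ∀ D' ∈ F5, s.theBlock (S ∪ ↑D') ∈ BT := by
    intro D' hD'
    rw [hF5, Finset.mem_powersetCard] at hD'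
    obtain ⟨hsub, hcard⟩ := hD'
    rw [hA, Set.Finite.subset_toFinset] at hsub
    obtain ⟨hsubE, hcard5⟩ := hunion hsub hcard
    obtain ⟨hBl, hsubBl⟩ := s.theBlock_spec hsubE hcard5
    rw [hBT, Set.Finite.mem_toFinset]
    exact ⟨hBl, Set.subset_union_left.trans hsubBl⟩
  have hcount := Finset.card_eq_sum_card_fiberwise hmaps
  have hcardA : A.card = 12 - i := by
    rw [hA, ← Set.ncard_eq_toFinset_card _ (s.E \ S).toFinite,
      Set.ncard_diff hS S.toFinite, s.hEcard]
  have hcardF5 : F5.card = (12 - i).choose (5 - i) := by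
    rw [hF5, Finset.card_powersetCard, hcardA]
  have hfiber : ∀ Bl ∈ BT,
      (F5.filter (fun D' : Finset β => s.theBlock (S ∪ ↑D') = Bl)).card = (6 - i).choose (5 - i) := by
    intro Bl hBl
    rw [hBT, Set.Finite.mem_toFinset] at hBl
    obtain ⟨hBlB, hSBl⟩ := hBl
    obtain ⟨hBlE, hBl6⟩ := s.hBlocks Bl hBlB
    have heq : F5.filter (fun D' : Finset β => s.theBlock (S ∪ ↑D') = Bl)
        = ((Bl \ S).toFinite.toFinset).powersetCard (5 - i) := by
      ext D'
      rw [Finset.mem_filter, hF5, Finset.mem_powersetCard, Finset.mem_powersetCard,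
        hA, Set.Finite.subset_toFinset, Set.Finite.subset_toFinset]
      constructor
      · rintro ⟨⟨hsub, hcard⟩, hblk⟩
        refine ⟨?_, hcard⟩
        obtain ⟨hsubE, hcard5⟩ := hunion hsub hcard
        have h2 := (s.theBlock_spec hsubE hcard5).2
        rw [hblk] at h2
        exact Set.subset_diff.mpr ⟨Set.subset_union_right.trans h2, (hdisj hsub).symm⟩
      · rintro ⟨hsub, hcard⟩
        have hsub' : ↑D' ⊆ s.E \ S := hsub.trans (Set.diff_subset_diff_left hBlE)
        refine ⟨⟨hsub', hcard⟩, ?_⟩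
        obtain ⟨hsubE, hcard5⟩ := hunion hsub' hcard
        exact s.theBlock_eq hsubE hcard5 hBlB
          (Set.union_subset hSBl (hsub.trans Set.diff_subset))
    rw [heq, Finset.card_powersetCard, ← Set.ncard_eq_toFinset_card _ (Bl \ S).toFinite,
      Set.ncard_diff hSBl S.toFinite, hBl6]
  rw [Finset.sum_congr rfl hfiber, Finset.sum_const, smul_eq_mul] at hcount
  rw [← hcardF5, hcount, hBT, ← Set.ncard_eq_toFinset_card _ (s.blocksThrough S).toFinite]

lemma ncard_blocksThrough (hS : S ⊆ s.E) {i lam : ℕ} (hi : S.ncard = i) (h5 : i ≤ 5)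
    (hval : lam * Nat.choose (6 - i) (5 - i) = Nat.choose (12 - i) (5 - i))
    (hpos : 0 < Nat.choose (6 - i) (5 - i)) :
    (s.blocksThrough S).ncard = lam := by
  have h := s.card_blocksThrough_mul hS (by omega)
  rw [hi] at h
  exact Nat.eq_of_mul_eq_mul_right hpos (h.trans hval.symm)

lemma card_filter_block (hS : S ⊆ s.E) (h5 : S.ncard ≤ 5) :
    (((s.E \ S).toFinite.toFinset.powersetCard (6 - S.ncard)).filter
      (fun T : Finset β => S ∪ ↑T ∈ s.Blocks)).card = (s.blocksThrough S).ncard := by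
  classical
  rw [Set.ncard_eq_toFinset_card _ (s.blocksThrough S).toFinite]
  refine Finset.card_bij (fun T _ => S ∪ ↑T) ?_ ?_ ?_
  · intro T hT
    rw [Finset.mem_filter] at hT
    rw [Set.Finite.mem_toFinset]
    exact ⟨hT.2, Set.subset_union_left⟩
  · intro T₁ h₁ T₂ h₂ heq
    rw [Finset.mem_filter, Finset.mem_powersetCard, Set.Finite.subset_toFinset] at h₁ h₂
    have e1 : (S ∪ ↑T₁) \ S = (T₁ : Set β) := by
      rw [Set.union_diff_left, (Set.subset_diff.mp h₁.1.1).2.sdiff_eq_left]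
    have e2 : (S ∪ ↑T₂) \ S = (T₂ : Set β) := by
      rw [Set.union_diff_left, (Set.subset_diff.mp h₂.1.1).2.sdiff_eq_left]
    have heq' : S ∪ (↑T₁ : Set β) = S ∪ ↑T₂ := heq
    exact Finset.coe_injective (by rw [← e1, ← e2, heq'])
  · intro Bl hBl
    rw [Set.Finite.mem_toFinset] at hBl
    obtain ⟨hBlB, hSBl⟩ := hBl
    obtain ⟨hBlE, hBl6⟩ := s.hBlocks Bl hBlB
    refine ⟨(Bl \ S).toFinite.toFinset, ?_, ?_⟩
    · rw [Finset.mem_filter, Finset.mem_powersetCard, Set.Finite.subset_toFinset,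
        Set.Finite.coe_toFinset, ← Set.ncard_eq_toFinset_card _ (Bl \ S).toFinite]
      refine ⟨⟨Set.diff_subset_diff_left hBlE, ?_⟩, ?_⟩
      · rw [Set.ncard_diff hSBl S.toFinite, hBl6]
      · rw [Set.union_diff_cancel hSBl]
        exact hBlB
    · show S ∪ ↑((Bl \ S).toFinite.toFinset) = Bl
      rw [Set.Finite.coe_toFinset, Set.union_diff_cancel hSBl]


end St

end KLPaper

section SumHelpers

variable {β : Type} [Fintype β]

attribute [local instance] Classical.propDecidable

lemma sum_pc_const {A : Finset β} {j : ℕ} {f : Finset β → Polynomial ℤ} {c : Polynomial ℤ}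
    (h : ∀ T ∈ A.powersetCard j, f T = c) :
    ∑ T ∈ A.powersetCard j, f T = (A.card.choose j) • c := by
  rw [Finset.sum_congr rfl h, Finset.sum_const, Finset.card_powersetCard]

lemma sum_pc_split {A : Finset β} {j : ℕ} {f : Finset β → Polynomial ℤ} (p : Finset β → Prop)
    {c : Polynomial ℤ}
    (h1 : ∀ T ∈ A.powersetCard j, p T → f T = c)
    (h2 : ∀ T ∈ A.powersetCard j, ¬p T → f T = 0) :
    ∑ T ∈ A.powersetCard j, f T = ((A.powersetCard j).filter p).card • c := by
  rw [← Finset.sum_filter_add_sum_filter_not (A.powersetCard j) p f]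
  have e1 : ∑ T ∈ (A.powersetCard j).filter p, f T
      = ((A.powersetCard j).filter p).card • c := by
    rw [Finset.sum_congr rfl
      (fun T hT => h1 T (Finset.mem_filter.mp hT).1 (Finset.mem_filter.mp hT).2),
      Finset.sum_const]
  have e2 : ∑ T ∈ (A.powersetCard j).filter (fun T => ¬ p T), f T = 0 :=
    Finset.sum_eq_zero
      (fun T hT => h2 T (Finset.mem_filter.mp hT).1 (Finset.mem_filter.mp hT).2)
  rw [e1, e2, add_zero]

lemma poly_rep2 {q : Polynomial ℤ} (h : q.natDegree ≤ 2) :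
    q = Polynomial.C (q.coeff 0) + Polynomial.C (q.coeff 1) * Polynomial.X
      + Polynomial.C (q.coeff 2) * Polynomial.X ^ 2 := by
  refine Polynomial.ext fun n => ?_
  rcases n with _ | _ | _ | n
  · rw [Polynomial.coeff_add, Polynomial.coeff_add, Polynomial.coeff_C_mul,
      Polynomial.coeff_C_mul, Polynomial.coeff_C, Polynomial.coeff_X, Polynomial.coeff_X_pow,
      if_pos rfl, if_neg (by omega), if_neg (by omega)]
    ring
  · rw [Polynomial.coeff_add, Polynomial.coeff_add, Polynomial.coeff_C_mul,
      Polynomial.coeff_C_mul, Polynomial.coeff_C, Polynomial.coeff_X, Polynomial.coeff_X_pow,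
      if_neg (by omega), if_pos rfl, if_neg (by omega)]
    ring
  · rw [Polynomial.coeff_add, Polynomial.coeff_add, Polynomial.coeff_C_mul,
      Polynomial.coeff_C_mul, Polynomial.coeff_C, Polynomial.coeff_X, Polynomial.coeff_X_pow,
      if_neg (by omega), if_neg (by omega), if_pos rfl]
    ring
  · rw [Polynomial.coeff_eq_zero_of_natDegree_lt (by omega), Polynomial.coeff_add,
      Polynomial.coeff_add, Polynomial.coeff_C_mul, Polynomial.coeff_C_mul, Polynomial.coeff_C,
      Polynomial.coeff_X, Polynomial.coeff_X_pow,
      if_neg (by omega), if_neg (by omega), if_neg (by omega)]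
    ring

end SumHelpers

namespace St2

open KLPaper KLPaper.St

variable {β : Type} [Fintype β] (s : KLPaper.St β) {P Z : Matroid β → Polynomial ℤ}

attribute [local instance] Classical.propDecidable

lemma contract_ground' (A : Set β) : (KLPaper.contract s.M A).E = s.E \ A := by
  rw [KLPaper.contract_ground, s.hME]

lemma rank_contract_eq {A : Set β} (hA : A ⊆ s.E) :
    KLPaper.rank (KLPaper.contract s.M A) + KLPaper.rk s.M A = 6 := by
  have h := KLPaper.rank_contract_add (M := s.M) (C := A) (by rw [s.hME]; exact hA)
  rw [s.rank_M] at h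
  exact h

lemma contract_ground_ne {A : Set β} (hA : A ⊆ s.E) (hcard : A.ncard ≤ 11) :
    (KLPaper.contract s.M A).E ≠ ∅ := by
  rw [contract_ground' s A]
  intro h
  rw [Set.diff_eq_empty] at h
  have hAE : A = s.E := subset_antisymm hA h
  rw [hAE, s.hEcard] at hcard
  omega

lemma P_contract_ground (hPZ : PZaxioms P Z) : P (KLPaper.contract s.M s.E) = 1 := by
  refine (hPZ.1 _ ?_).1
  rw [contract_ground' s s.E, Set.diff_self]

lemma P_contract_full (hPZ : PZaxioms P Z) {A : Set β} (hA : A ⊆ s.E)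
    (hrk : KLPaper.rk s.M A = 6) (h11 : A.ncard ≤ 11) :
    P (KLPaper.contract s.M A) = 0 := by
  rcases hPZ.2.1 (KLPaper.contract s.M A) (contract_ground_ne s hA h11) with h | h
  · exact h
  · exfalso
    have h2 := rank_contract_eq s hA
    rw [hrk] at h2
    rw [show KLPaper.rank (KLPaper.contract s.M A) = 0 by omega] at h
    omega

lemma P_contract_mid (hPZ : PZaxioms P Z) {A : Set β} (hA : A ⊆ s.E)
    (h7 : 7 ≤ A.ncard) (h11 : A.ncard ≤ 11) : P (KLPaper.contract s.M A) = 0 :=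
  P_contract_full s hPZ hA (s.rk_big hA h7) h11

lemma P_contract_6nb (hPZ : PZaxioms P Z) {A : Set β} (hA : A ⊆ s.E)
    (h6 : A.ncard = 6) (hnb : A ∉ s.Blocks) : P (KLPaper.contract s.M A) = 0 :=
  P_contract_full s hPZ hA (s.rk_six_not_block hA h6 hnb) (by omega)

lemma Z_eq (hPZ : PZaxioms P Z) {S : Set β} (hS : S ⊆ s.E) :
    Z (KLPaper.contract s.M S) = ∑ T ∈ ((s.E \ S).toFinite.toFinset).powerset,
      X ^ (KLPaper.rk (KLPaper.contract s.M S) ↑T)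
        * P (KLPaper.contract s.M (S ∪ ↑T)) := by
  have h := hPZ.2.2.2 (KLPaper.contract s.M S)
  have hidx : (KLPaper.contract s.M S).E.toFinite.toFinset
      = (s.E \ S).toFinite.toFinset := by
    ext x
    rw [Set.Finite.mem_toFinset, Set.Finite.mem_toFinset, contract_ground' s S]
  rw [h, hidx]
  exact Finset.sum_congr rfl fun T hT => by rw [KLPaper.contract_contract]

lemma rk_contract_add' {S : Set β} (hS : S ⊆ s.E) {T : Finset β} (hT : ↑T ⊆ s.E \ S) :
    KLPaper.rk (KLPaper.contract s.M S) ↑T + KLPaper.rk s.M S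
      = KLPaper.rk s.M (S ∪ ↑T) :=
  KLPaper.rk_contract (by rw [s.hME]; exact hS) (by rw [s.hME]; exact hT)

lemma pc_facts {S : Set β} (hS : S ⊆ s.E) {j : ℕ} {T : Finset β}
    (hT : T ∈ ((s.E \ S).toFinite.toFinset).powersetCard j) :
    ↑T ⊆ s.E \ S ∧ S ∪ ↑T ⊆ s.E ∧ (S ∪ ↑T : Set β).ncard = S.ncard + j := by
  rw [Finset.mem_powersetCard, Set.Finite.subset_toFinset] at hT
  obtain ⟨h1, h2⟩ := hT
  refine ⟨h1, Set.union_subset hS (h1.trans Set.diff_subset), ?_⟩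
  rw [Set.ncard_union_eq (Set.disjoint_of_subset_right h1 Set.disjoint_sdiff_right)
    S.toFinite (T : Set β).toFinite, Set.ncard_coe_finset, h2]

lemma card_EdiffS {S : Set β} (hS : S ⊆ s.E) {i : ℕ} (hi : S.ncard = i) :
    ((s.E \ S).toFinite.toFinset).card = 12 - i := by
  rw [← Set.ncard_eq_toFinset_card _ (s.E \ S).toFinite,
    Set.ncard_diff hS S.toFinite, s.hEcard, hi]

/-- Case `|S| = 6`, `S` a block : `P (M ⧸ S) = 1`. -/
lemma P_contract_block (hPZ : PZaxioms P Z) {Bl : Set β} (hBl : Bl ∈ s.Blocks) :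
    P (KLPaper.contract s.M Bl) = 1 := by
  obtain ⟨hBlE, hBl6⟩ := s.hBlocks Bl hBl
  have hrkS : KLPaper.rk s.M Bl = 5 := s.rk_block hBl
  have hrankN : KLPaper.rank (KLPaper.contract s.M Bl) = 1 := by
    have := rank_contract_eq s hBlE; omega
  have hA : ((s.E \ Bl).toFinite.toFinset).card = 6 := by
    rw [card_EdiffS s hBlE hBl6]
  have hZ := Z_eq s hPZ hBlE
  rw [Finset.powerset_card_biUnion,
    Finset.sum_biUnion ((Finset.pairwise_disjoint_powersetCard _).set_pairwise _), hA] at hZ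
  simp only [Finset.sum_range_succ, Finset.sum_range_zero, zero_add] at hZ
  -- generic middle-sum evaluation (j = 1..5)
  have emid : ∀ j : ℕ, 1 ≤ j → j ≤ 5 →
      ∑ T ∈ ((s.E \ Bl).toFinite.toFinset).powersetCard j,
        X ^ (KLPaper.rk (KLPaper.contract s.M Bl) ↑T)
          * P (KLPaper.contract s.M (Bl ∪ ↑T)) = 0 := by
    intro j hj1 hj5
    refine Finset.sum_eq_zero fun T hT => ?_
    obtain ⟨h1, h2, h3⟩ := pc_facts s hBlE hT
    rw [hBl6] at h3
    rw [P_contract_mid s hPZ h2 (by omega) (by omega), mul_zero]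
  have e0 : ∑ T ∈ ((s.E \ Bl).toFinite.toFinset).powersetCard 0,
      X ^ (KLPaper.rk (KLPaper.contract s.M Bl) ↑T)
        * P (KLPaper.contract s.M (Bl ∪ ↑T)) = P (KLPaper.contract s.M Bl) := by
    rw [Finset.powersetCard_zero, Finset.sum_singleton]
    simp [KLPaper.rk_empty]
  have e6 : ∑ T ∈ ((s.E \ Bl).toFinite.toFinset).powersetCard 6,
      X ^ (KLPaper.rk (KLPaper.contract s.M Bl) ↑T)
        * P (KLPaper.contract s.M (Bl ∪ ↑T)) = X := by
    rw [← hA, Finset.powersetCard_self, Finset.sum_singleton, Set.Finite.coe_toFinset,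
      Set.union_diff_cancel hBlE]
    have hexp : KLPaper.rk (KLPaper.contract s.M Bl) (s.E \ Bl) = 1 := by
      have h := rk_contract_add' s hBlE (T := (s.E \ Bl).toFinite.toFinset)
        (by rw [Set.Finite.coe_toFinset])
      rw [Set.Finite.coe_toFinset, Set.union_diff_cancel hBlE, hrkS] at h
      have h6 : KLPaper.rk s.M s.E = 6 := by
        have := s.rank_M; rwa [KLPaper.rank, s.hME] at this
      omega
    rw [hexp, P_contract_ground s hPZ, mul_one, pow_one]
  rw [e0, emid 1 (by norm_num) (by norm_num), emid 2 (by norm_num) (by norm_num),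
    emid 3 (by norm_num) (by norm_num), emid 4 (by norm_num) (by norm_num),
    emid 5 (by norm_num) (by norm_num), e6, add_zero, add_zero, add_zero, add_zero,
    add_zero] at hZ
  -- now hZ : Z N = P N + X ; use palindromy
  have hpal := (hPZ.2.2.1 (KLPaper.contract s.M Bl)).2 0 (by rw [hrankN]; omega)
  rw [hrankN, hZ] at hpal
  simp only [Polynomial.coeff_add, Polynomial.coeff_X_zero, Polynomial.coeff_X_one,
    Nat.sub_zero, add_zero] at hpal
  rcases hPZ.2.1 (KLPaper.contract s.M Bl) (contract_ground_ne s hBlE (by omega)) with h | h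
  · rw [h] at hpal; simp at hpal
  · rw [hrankN] at h
    have hdeg : (P (KLPaper.contract s.M Bl)).natDegree = 0 := by omega
    have hc1 : (P (KLPaper.contract s.M Bl)).coeff 1 = 0 :=
      Polynomial.coeff_eq_zero_of_natDegree_lt (by omega)
    rw [hc1, zero_add] at hpal
    rw [Polynomial.eq_C_of_natDegree_le_zero (le_of_eq hdeg), hpal]
    simp

lemma rk_ground : KLPaper.rk s.M s.E = 6 := by
  have h := s.rank_M; rwa [KLPaper.rank, s.hME] at h

lemma card_EdiffS' {S : Set β} (hS : S ⊆ s.E) {i m : ℕ} (hi : S.ncard = i)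
    (hm : 12 - i = m) : ((s.E \ S).toFinite.toFinset).card = m := by
  rw [← Set.ncard_eq_toFinset_card _ (s.E \ S).toFinite,
    Set.ncard_diff hS S.toFinite, s.hEcard, hi, hm]

lemma sum_pc_zero (S : Set β) (j : ℕ) (hj : j = 0) :
    ∑ T ∈ ((s.E \ S).toFinite.toFinset).powersetCard j,
      X ^ (KLPaper.rk (KLPaper.contract s.M S) ↑T)
        * P (KLPaper.contract s.M (S ∪ ↑T)) = P (KLPaper.contract s.M S) := by
  subst hj
  rw [Finset.powersetCard_zero, Finset.sum_singleton]
  simp [KLPaper.rk_empty]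

lemma sum_pc_val (hPZ : PZaxioms P Z) {S : Set β} (hS : S ⊆ s.E) {i j m : ℕ}
    (hi : S.ncard = i) (hij : i + j ≤ 5) {q : Polynomial ℤ}
    (hq : ∀ U, U ⊆ s.E → U.ncard = i + j → P (KLPaper.contract s.M U) = q)
    (hm : (12 - i).choose j = m) :
    ∑ T ∈ ((s.E \ S).toFinite.toFinset).powersetCard j,
      X ^ (KLPaper.rk (KLPaper.contract s.M S) ↑T)
        * P (KLPaper.contract s.M (S ∪ ↑T)) = m • (X ^ j * q) := by
  rw [← hm, ← card_EdiffS' s hS hi rfl]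
  refine sum_pc_const fun T hT => ?_
  obtain ⟨h1, h2, h3⟩ := pc_facts s hS hT
  rw [hi] at h3
  have hrkU : KLPaper.rk s.M (S ∪ ↑T) = i + j := by rw [s.rk_small h2 (by omega), h3]
  have hrkS : KLPaper.rk s.M S = i := by rw [s.rk_small hS (by omega), hi]
  have hexp := rk_contract_add' s hS h1
  rw [hrkU, hrkS] at hexp
  rw [show KLPaper.rk (KLPaper.contract s.M S) ↑T = j from by omega, hq _ h2 h3]

lemma sum_pc_mid0 (hPZ : PZaxioms P Z) {S : Set β} (hS : S ⊆ s.E) {i j : ℕ}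
    (hi : S.ncard = i) (h7 : 7 ≤ i + j) (h11 : i + j ≤ 11) :
    ∑ T ∈ ((s.E \ S).toFinite.toFinset).powersetCard j,
      X ^ (KLPaper.rk (KLPaper.contract s.M S) ↑T)
        * P (KLPaper.contract s.M (S ∪ ↑T)) = 0 := by
  refine Finset.sum_eq_zero fun T hT => ?_
  obtain ⟨h1, h2, h3⟩ := pc_facts s hS hT
  rw [hi] at h3
  rw [P_contract_mid s hPZ h2 (by omega) (by omega), mul_zero]

lemma sum_pc_six (hPZ : PZaxioms P Z) {S : Set β} (hS : S ⊆ s.E) {i j e lam : ℕ}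
    (hi : S.ncard = i) (hj : i + j = 6) (he : e + i = 5)
    (hlam : (s.blocksThrough S).ncard = lam) :
    ∑ T ∈ ((s.E \ S).toFinite.toFinset).powersetCard j,
      X ^ (KLPaper.rk (KLPaper.contract s.M S) ↑T)
        * P (KLPaper.contract s.M (S ∪ ↑T)) = lam • X ^ e := by
  have hi5 : i ≤ 5 := by omega
  have hrkS : KLPaper.rk s.M S = i := by rw [s.rk_small hS (by omega), hi]
  have hcf := s.card_filter_block hS (by omega)
  rw [hi, show (6 : ℕ) - i = j from by omega] at hcf
  rw [sum_pc_split (p := fun T : Finset β => S ∪ ↑T ∈ s.Blocks) ?_ ?_, hcf, hlam]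
  · intro T hT hp
    obtain ⟨h1, h2, h3⟩ := pc_facts s hS hT
    have hrkU : KLPaper.rk s.M (S ∪ ↑T) = 5 := s.rk_block hp
    have hexp := rk_contract_add' s hS h1
    rw [hrkU, hrkS] at hexp
    rw [show KLPaper.rk (KLPaper.contract s.M S) ↑T = e from by omega,
      P_contract_block s hPZ hp, mul_one]
  · intro T hT hp
    obtain ⟨h1, h2, h3⟩ := pc_facts s hS hT
    rw [hi] at h3
    rw [P_contract_6nb s hPZ h2 (by omega) hp, mul_zero]

lemma sum_pc_top (hPZ : PZaxioms P Z) {S : Set β} (hS : S ⊆ s.E) {i j r e : ℕ}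
    (hi : S.ncard = i) (hj : i + j = 12) (hrkS : KLPaper.rk s.M S = r) (he : r + e = 6) :
    ∑ T ∈ ((s.E \ S).toFinite.toFinset).powersetCard j,
      X ^ (KLPaper.rk (KLPaper.contract s.M S) ↑T)
        * P (KLPaper.contract s.M (S ∪ ↑T)) = X ^ e := by
  have hcard : ((s.E \ S).toFinite.toFinset).card = j := card_EdiffS' s hS hi (by omega)
  rw [← hcard, Finset.powersetCard_self, Finset.sum_singleton, Set.Finite.coe_toFinset,
    Set.union_diff_cancel hS]
  have hexp : KLPaper.rk (KLPaper.contract s.M S) (s.E \ S) = e := by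
    have h := rk_contract_add' s hS (T := (s.E \ S).toFinite.toFinset)
      (by rw [Set.Finite.coe_toFinset])
    rw [Set.Finite.coe_toFinset, Set.union_diff_cancel hS, hrkS, rk_ground s] at h
    omega
  rw [hexp, P_contract_ground s hPZ, mul_one]

/-- Case `|S| = 5` : `P (M ⧸ S) = 0`. -/
lemma P_contract_five (hPZ : PZaxioms P Z) {S : Set β} (hS : S ⊆ s.E) (h5 : S.ncard = 5) :
    P (KLPaper.contract s.M S) = 0 := by
  have hrkS : KLPaper.rk s.M S = 5 := by rw [s.rk_small hS (by omega), h5]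
  have hrankN : KLPaper.rank (KLPaper.contract s.M S) = 1 := by
    have := rank_contract_eq s hS; omega
  have hZ := Z_eq s hPZ hS
  rw [Finset.powerset_card_biUnion,
    Finset.sum_biUnion ((Finset.pairwise_disjoint_powersetCard _).set_pairwise _),
    card_EdiffS' s hS h5 (by norm_num : 12 - 5 = 7)] at hZ
  simp only [Finset.sum_range_succ, Finset.sum_range_zero, zero_add] at hZ
  rw [sum_pc_zero s S 0 rfl,
    sum_pc_six s hPZ hS (lam := 1) h5 (by norm_num) (by norm_num : 0 + 5 = 5)
      (s.ncard_blocksThrough hS h5 (by norm_num) (by decide) (by decide)),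
    sum_pc_mid0 s hPZ hS h5 (by norm_num : 7 ≤ 5 + 2) (by norm_num),
    sum_pc_mid0 s hPZ hS h5 (by norm_num : 7 ≤ 5 + 3) (by norm_num),
    sum_pc_mid0 s hPZ hS h5 (by norm_num : 7 ≤ 5 + 4) (by norm_num),
    sum_pc_mid0 s hPZ hS h5 (by norm_num : 7 ≤ 5 + 5) (by norm_num),
    sum_pc_mid0 s hPZ hS h5 (by norm_num : 7 ≤ 5 + 6) (by norm_num),
    sum_pc_top s hPZ hS h5 (by norm_num) hrkS (by norm_num : 5 + 1 = 6)] at hZ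
  have hZ' : Z (KLPaper.contract s.M S) = P (KLPaper.contract s.M S) + 1 + X := by
    rw [hZ]; ring
  have e0 : (Z (KLPaper.contract s.M S)).coeff 0
      = (P (KLPaper.contract s.M S)).coeff 0 + 1 := by
    rw [hZ']; simp [Polynomial.coeff_one, Polynomial.coeff_X]
  have e1 : (Z (KLPaper.contract s.M S)).coeff 1
      = (P (KLPaper.contract s.M S)).coeff 1 + 1 := by
    rw [hZ']; simp [Polynomial.coeff_one, Polynomial.coeff_X]
  have hpal := (hPZ.2.2.1 (KLPaper.contract s.M S)).2 0 (Nat.zero_le _)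
  rw [hrankN, Nat.sub_zero, e0, e1] at hpal
  rcases hPZ.2.1 (KLPaper.contract s.M S) (contract_ground_ne s hS (by omega)) with h | hdeg
  · exact h
  · rw [hrankN] at hdeg
    have hd : (P (KLPaper.contract s.M S)).natDegree = 0 := by omega
    have hc1 : (P (KLPaper.contract s.M S)).coeff 1 = 0 :=
      Polynomial.coeff_eq_zero_of_natDegree_lt (by omega)
    have hc0 : (P (KLPaper.contract s.M S)).coeff 0 = 0 := by rw [hc1] at hpal; linarith
    rw [Polynomial.eq_C_of_natDegree_le_zero hd.le, hc0, map_zero]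

/-- Case `|S| = 4` : `P (M ⧸ S) = 1`. -/
lemma P_contract_four (hPZ : PZaxioms P Z) {S : Set β} (hS : S ⊆ s.E) (h4 : S.ncard = 4) :
    P (KLPaper.contract s.M S) = 1 := by
  have hrkS : KLPaper.rk s.M S = 4 := by rw [s.rk_small hS (by omega), h4]
  have hrankN : KLPaper.rank (KLPaper.contract s.M S) = 2 := by
    have := rank_contract_eq s hS; omega
  have hZ := Z_eq s hPZ hS
  rw [Finset.powerset_card_biUnion,
    Finset.sum_biUnion ((Finset.pairwise_disjoint_powersetCard _).set_pairwise _),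
    card_EdiffS' s hS h4 (by norm_num : 12 - 4 = 8)] at hZ
  simp only [Finset.sum_range_succ, Finset.sum_range_zero, zero_add] at hZ
  rw [sum_pc_zero s S 0 rfl,
    sum_pc_val s hPZ hS (q := 0) (m := 8) h4 (by norm_num : 4 + 1 ≤ 5)
      (fun U hU hc => P_contract_five s hPZ hU (by omega)) (by decide),
    sum_pc_six s hPZ hS (lam := 4) h4 (by norm_num) (by norm_num : 1 + 4 = 5)
      (s.ncard_blocksThrough hS h4 (by norm_num) (by decide) (by decide)),
    sum_pc_mid0 s hPZ hS h4 (by norm_num : 7 ≤ 4 + 3) (by norm_num),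
    sum_pc_mid0 s hPZ hS h4 (by norm_num : 7 ≤ 4 + 4) (by norm_num),
    sum_pc_mid0 s hPZ hS h4 (by norm_num : 7 ≤ 4 + 5) (by norm_num),
    sum_pc_mid0 s hPZ hS h4 (by norm_num : 7 ≤ 4 + 6) (by norm_num),
    sum_pc_mid0 s hPZ hS h4 (by norm_num : 7 ≤ 4 + 7) (by norm_num),
    sum_pc_top s hPZ hS h4 (by norm_num) hrkS (by norm_num : 4 + 2 = 6)] at hZ
  have hZ' : Z (KLPaper.contract s.M S)
      = P (KLPaper.contract s.M S) + C 4 * X + X ^ 2 := by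
    rw [hZ]; simp only [map_ofNat]; ring
  have e0 : (Z (KLPaper.contract s.M S)).coeff 0
      = (P (KLPaper.contract s.M S)).coeff 0 := by
    rw [hZ']; simp [Polynomial.coeff_X_pow, Polynomial.coeff_X, Polynomial.coeff_one]
  have e2 : (Z (KLPaper.contract s.M S)).coeff 2
      = (P (KLPaper.contract s.M S)).coeff 2 + 1 := by
    rw [hZ']; simp [Polynomial.coeff_X_pow, Polynomial.coeff_X, Polynomial.coeff_one]
  have hpal := (hPZ.2.2.1 (KLPaper.contract s.M S)).2 0 (Nat.zero_le _)
  rw [hrankN, Nat.sub_zero, e0, e2] at hpal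
  rcases hPZ.2.1 (KLPaper.contract s.M S) (contract_ground_ne s hS (by omega)) with h | hdeg
  · rw [h] at hpal; simp at hpal
  · rw [hrankN] at hdeg
    have hd : (P (KLPaper.contract s.M S)).natDegree = 0 := by omega
    have hc2 : (P (KLPaper.contract s.M S)).coeff 2 = 0 :=
      Polynomial.coeff_eq_zero_of_natDegree_lt (by omega)
    have hc0 : (P (KLPaper.contract s.M S)).coeff 0 = 1 := by rw [hc2] at hpal; linarith
    rw [Polynomial.eq_C_of_natDegree_le_zero hd.le, hc0, map_one]

/-- Case `|S| = 3` : `P (M ⧸ S) = 1 + 3t`. -/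
lemma P_contract_three (hPZ : PZaxioms P Z) {S : Set β} (hS : S ⊆ s.E) (h3 : S.ncard = 3) :
    P (KLPaper.contract s.M S) = 1 + C 3 * X := by
  have hrkS : KLPaper.rk s.M S = 3 := by rw [s.rk_small hS (by omega), h3]
  have hrankN : KLPaper.rank (KLPaper.contract s.M S) = 3 := by
    have := rank_contract_eq s hS; omega
  have hZ := Z_eq s hPZ hS
  rw [Finset.powerset_card_biUnion,
    Finset.sum_biUnion ((Finset.pairwise_disjoint_powersetCard _).set_pairwise _),
    card_EdiffS' s hS h3 (by norm_num : 12 - 3 = 9)] at hZ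
  simp only [Finset.sum_range_succ, Finset.sum_range_zero, zero_add] at hZ
  rw [sum_pc_zero s S 0 rfl,
    sum_pc_val s hPZ hS (q := 1) (m := 9) h3 (by norm_num : 3 + 1 ≤ 5)
      (fun U hU hc => P_contract_four s hPZ hU (by omega)) (by decide),
    sum_pc_val s hPZ hS (q := 0) (m := 36) h3 (by norm_num : 3 + 2 ≤ 5)
      (fun U hU hc => P_contract_five s hPZ hU (by omega)) (by decide),
    sum_pc_six s hPZ hS (lam := 12) h3 (by norm_num) (by norm_num : 2 + 3 = 5)
      (s.ncard_blocksThrough hS h3 (by norm_num) (by decide) (by decide)),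
    sum_pc_mid0 s hPZ hS h3 (by norm_num : 7 ≤ 3 + 4) (by norm_num),
    sum_pc_mid0 s hPZ hS h3 (by norm_num : 7 ≤ 3 + 5) (by norm_num),
    sum_pc_mid0 s hPZ hS h3 (by norm_num : 7 ≤ 3 + 6) (by norm_num),
    sum_pc_mid0 s hPZ hS h3 (by norm_num : 7 ≤ 3 + 7) (by norm_num),
    sum_pc_mid0 s hPZ hS h3 (by norm_num : 7 ≤ 3 + 8) (by norm_num),
    sum_pc_top s hPZ hS h3 (by norm_num) hrkS (by norm_num : 3 + 3 = 6)] at hZ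
  have hZ' : Z (KLPaper.contract s.M S)
      = P (KLPaper.contract s.M S) + C 9 * X + C 12 * X ^ 2 + X ^ 3 := by
    rw [hZ]; simp only [map_ofNat]; ring
  have e0 : (Z (KLPaper.contract s.M S)).coeff 0
      = (P (KLPaper.contract s.M S)).coeff 0 := by
    rw [hZ']; simp [Polynomial.coeff_X_pow, Polynomial.coeff_X, Polynomial.coeff_one]
  have e1 : (Z (KLPaper.contract s.M S)).coeff 1
      = (P (KLPaper.contract s.M S)).coeff 1 + 9 := by
    rw [hZ']; simp [Polynomial.coeff_X_pow, Polynomial.coeff_X, Polynomial.coeff_one]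
  have e2 : (Z (KLPaper.contract s.M S)).coeff 2
      = (P (KLPaper.contract s.M S)).coeff 2 + 12 := by
    rw [hZ']; simp [Polynomial.coeff_X_pow, Polynomial.coeff_X, Polynomial.coeff_one]
  have e3 : (Z (KLPaper.contract s.M S)).coeff 3
      = (P (KLPaper.contract s.M S)).coeff 3 + 1 := by
    rw [hZ']; simp [Polynomial.coeff_X_pow, Polynomial.coeff_X, Polynomial.coeff_one]
  have hpal0 := (hPZ.2.2.1 (KLPaper.contract s.M S)).2 0 (Nat.zero_le _)
  rw [hrankN, Nat.sub_zero, e0, e3] at hpal0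
  have hpal1 := (hPZ.2.2.1 (KLPaper.contract s.M S)).2 1 (by rw [hrankN]; omega)
  rw [hrankN, show (3 : ℕ) - 1 = 2 from rfl, e1, e2] at hpal1
  rcases hPZ.2.1 (KLPaper.contract s.M S) (contract_ground_ne s hS (by omega)) with h | hdeg
  · rw [h] at hpal0; simp at hpal0
  · rw [hrankN] at hdeg
    have hd : (P (KLPaper.contract s.M S)).natDegree ≤ 1 := by omega
    have hc2 : (P (KLPaper.contract s.M S)).coeff 2 = 0 :=
      Polynomial.coeff_eq_zero_of_natDegree_lt (by omega)
    have hc3 : (P (KLPaper.contract s.M S)).coeff 3 = 0 :=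
      Polynomial.coeff_eq_zero_of_natDegree_lt (by omega)
    have hc0 : (P (KLPaper.contract s.M S)).coeff 0 = 1 := by rw [hc3] at hpal0; linarith
    have hc1 : (P (KLPaper.contract s.M S)).coeff 1 = 3 := by rw [hc2] at hpal1; linarith
    rw [poly_rep2 (hd.trans (by norm_num)), hc0, hc1, hc2]
    simp

/-- Case `|S| = 2` : `P (M ⧸ S) = 1 + 20t`. -/
lemma P_contract_two (hPZ : PZaxioms P Z) {S : Set β} (hS : S ⊆ s.E) (h2 : S.ncard = 2) :
    P (KLPaper.contract s.M S) = 1 + C 20 * X := by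
  have hrkS : KLPaper.rk s.M S = 2 := by rw [s.rk_small hS (by omega), h2]
  have hrankN : KLPaper.rank (KLPaper.contract s.M S) = 4 := by
    have := rank_contract_eq s hS; omega
  have hZ := Z_eq s hPZ hS
  rw [Finset.powerset_card_biUnion,
    Finset.sum_biUnion ((Finset.pairwise_disjoint_powersetCard _).set_pairwise _),
    card_EdiffS' s hS h2 (by norm_num : 12 - 2 = 10)] at hZ
  simp only [Finset.sum_range_succ, Finset.sum_range_zero, zero_add] at hZ
  rw [sum_pc_zero s S 0 rfl,
    sum_pc_val s hPZ hS (q := 1 + C 3 * X) (m := 10) h2 (by norm_num : 2 + 1 ≤ 5)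
      (fun U hU hc => P_contract_three s hPZ hU (by omega)) (by decide),
    sum_pc_val s hPZ hS (q := 1) (m := 45) h2 (by norm_num : 2 + 2 ≤ 5)
      (fun U hU hc => P_contract_four s hPZ hU (by omega)) (by decide),
    sum_pc_val s hPZ hS (q := 0) (m := 120) h2 (by norm_num : 2 + 3 ≤ 5)
      (fun U hU hc => P_contract_five s hPZ hU (by omega)) (by decide),
    sum_pc_six s hPZ hS (lam := 30) h2 (by norm_num) (by norm_num : 3 + 2 = 5)
      (s.ncard_blocksThrough hS h2 (by norm_num) (by decide) (by decide)),
    sum_pc_mid0 s hPZ hS h2 (by norm_num : 7 ≤ 2 + 5) (by norm_num),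
    sum_pc_mid0 s hPZ hS h2 (by norm_num : 7 ≤ 2 + 6) (by norm_num),
    sum_pc_mid0 s hPZ hS h2 (by norm_num : 7 ≤ 2 + 7) (by norm_num),
    sum_pc_mid0 s hPZ hS h2 (by norm_num : 7 ≤ 2 + 8) (by norm_num),
    sum_pc_mid0 s hPZ hS h2 (by norm_num : 7 ≤ 2 + 9) (by norm_num),
    sum_pc_top s hPZ hS h2 (by norm_num) hrkS (by norm_num : 2 + 4 = 6)] at hZ
  have hZ' : Z (KLPaper.contract s.M S) = P (KLPaper.contract s.M S)
      + C 10 * X + C 75 * X ^ 2 + C 30 * X ^ 3 + X ^ 4 := by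
    rw [hZ]; simp only [map_ofNat]; ring
  have e0 : (Z (KLPaper.contract s.M S)).coeff 0
      = (P (KLPaper.contract s.M S)).coeff 0 := by
    rw [hZ']; simp [Polynomial.coeff_X_pow, Polynomial.coeff_X, Polynomial.coeff_one]
  have e1 : (Z (KLPaper.contract s.M S)).coeff 1
      = (P (KLPaper.contract s.M S)).coeff 1 + 10 := by
    rw [hZ']; simp [Polynomial.coeff_X_pow, Polynomial.coeff_X, Polynomial.coeff_one]
  have e3 : (Z (KLPaper.contract s.M S)).coeff 3
      = (P (KLPaper.contract s.M S)).coeff 3 + 30 := by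
    rw [hZ']; simp [Polynomial.coeff_X_pow, Polynomial.coeff_X, Polynomial.coeff_one]
  have e4 : (Z (KLPaper.contract s.M S)).coeff 4
      = (P (KLPaper.contract s.M S)).coeff 4 + 1 := by
    rw [hZ']; simp [Polynomial.coeff_X_pow, Polynomial.coeff_X, Polynomial.coeff_one]
  have hpal0 := (hPZ.2.2.1 (KLPaper.contract s.M S)).2 0 (Nat.zero_le _)
  rw [hrankN, Nat.sub_zero, e0, e4] at hpal0
  have hpal1 := (hPZ.2.2.1 (KLPaper.contract s.M S)).2 1 (by rw [hrankN]; omega)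
  rw [hrankN, show (4 : ℕ) - 1 = 3 from rfl, e1, e3] at hpal1
  rcases hPZ.2.1 (KLPaper.contract s.M S) (contract_ground_ne s hS (by omega)) with h | hdeg
  · rw [h] at hpal0; simp at hpal0
  · rw [hrankN] at hdeg
    have hd : (P (KLPaper.contract s.M S)).natDegree ≤ 1 := by omega
    have hc2 : (P (KLPaper.contract s.M S)).coeff 2 = 0 :=
      Polynomial.coeff_eq_zero_of_natDegree_lt (by omega)
    have hc3 : (P (KLPaper.contract s.M S)).coeff 3 = 0 :=
      Polynomial.coeff_eq_zero_of_natDegree_lt (by omega)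
    have hc4 : (P (KLPaper.contract s.M S)).coeff 4 = 0 :=
      Polynomial.coeff_eq_zero_of_natDegree_lt (by omega)
    have hc0 : (P (KLPaper.contract s.M S)).coeff 0 = 1 := by rw [hc4] at hpal0; linarith
    have hc1 : (P (KLPaper.contract s.M S)).coeff 1 = 20 := by rw [hc3] at hpal1; linarith
    rw [poly_rep2 (hd.trans (by norm_num)), hc0, hc1, hc2]
    simp

/-- Case `|S| = 1` : `P (M ⧸ S) = 1 + 55t + 55t²`. -/
lemma P_contract_one (hPZ : PZaxioms P Z) {S : Set β} (hS : S ⊆ s.E) (h1 : S.ncard = 1) :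
    P (KLPaper.contract s.M S) = 1 + C 55 * X + C 55 * X ^ 2 := by
  have hrkS : KLPaper.rk s.M S = 1 := by rw [s.rk_small hS (by omega), h1]
  have hrankN : KLPaper.rank (KLPaper.contract s.M S) = 5 := by
    have := rank_contract_eq s hS; omega
  have hZ := Z_eq s hPZ hS
  rw [Finset.powerset_card_biUnion,
    Finset.sum_biUnion ((Finset.pairwise_disjoint_powersetCard _).set_pairwise _),
    card_EdiffS' s hS h1 (by norm_num : 12 - 1 = 11)] at hZ
  simp only [Finset.sum_range_succ, Finset.sum_range_zero, zero_add] at hZ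
  rw [sum_pc_zero s S 0 rfl,
    sum_pc_val s hPZ hS (q := 1 + C 20 * X) (m := 11) h1 (by norm_num : 1 + 1 ≤ 5)
      (fun U hU hc => P_contract_two s hPZ hU (by omega)) (by decide),
    sum_pc_val s hPZ hS (q := 1 + C 3 * X) (m := 55) h1 (by norm_num : 1 + 2 ≤ 5)
      (fun U hU hc => P_contract_three s hPZ hU (by omega)) (by decide),
    sum_pc_val s hPZ hS (q := 1) (m := 165) h1 (by norm_num : 1 + 3 ≤ 5)
      (fun U hU hc => P_contract_four s hPZ hU (by omega)) (by decide),
    sum_pc_val s hPZ hS (q := 0) (m := 330) h1 (by norm_num : 1 + 4 ≤ 5)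
      (fun U hU hc => P_contract_five s hPZ hU (by omega)) (by decide),
    sum_pc_six s hPZ hS (lam := 66) h1 (by norm_num) (by norm_num : 4 + 1 = 5)
      (s.ncard_blocksThrough hS h1 (by norm_num) (by decide) (by decide)),
    sum_pc_mid0 s hPZ hS h1 (by norm_num : 7 ≤ 1 + 6) (by norm_num),
    sum_pc_mid0 s hPZ hS h1 (by norm_num : 7 ≤ 1 + 7) (by norm_num),
    sum_pc_mid0 s hPZ hS h1 (by norm_num : 7 ≤ 1 + 8) (by norm_num),
    sum_pc_mid0 s hPZ hS h1 (by norm_num : 7 ≤ 1 + 9) (by norm_num),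
    sum_pc_mid0 s hPZ hS h1 (by norm_num : 7 ≤ 1 + 10) (by norm_num),
    sum_pc_top s hPZ hS h1 (by norm_num) hrkS (by norm_num : 1 + 5 = 6)] at hZ
  have hZ' : Z (KLPaper.contract s.M S) = P (KLPaper.contract s.M S)
      + C 11 * X + C 275 * X ^ 2 + C 330 * X ^ 3 + C 66 * X ^ 4 + X ^ 5 := by
    rw [hZ]; simp only [map_ofNat]; ring
  have e0 : (Z (KLPaper.contract s.M S)).coeff 0
      = (P (KLPaper.contract s.M S)).coeff 0 := by
    rw [hZ']; simp [Polynomial.coeff_X_pow, Polynomial.coeff_X, Polynomial.coeff_one]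
  have e1 : (Z (KLPaper.contract s.M S)).coeff 1
      = (P (KLPaper.contract s.M S)).coeff 1 + 11 := by
    rw [hZ']; simp [Polynomial.coeff_X_pow, Polynomial.coeff_X, Polynomial.coeff_one]
  have e2 : (Z (KLPaper.contract s.M S)).coeff 2
      = (P (KLPaper.contract s.M S)).coeff 2 + 275 := by
    rw [hZ']; simp [Polynomial.coeff_X_pow, Polynomial.coeff_X, Polynomial.coeff_one]
  have e3 : (Z (KLPaper.contract s.M S)).coeff 3
      = (P (KLPaper.contract s.M S)).coeff 3 + 330 := by
    rw [hZ']; simp [Polynomial.coeff_X_pow, Polynomial.coeff_X, Polynomial.coeff_one]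
  have e4 : (Z (KLPaper.contract s.M S)).coeff 4
      = (P (KLPaper.contract s.M S)).coeff 4 + 66 := by
    rw [hZ']; simp [Polynomial.coeff_X_pow, Polynomial.coeff_X, Polynomial.coeff_one]
  have e5 : (Z (KLPaper.contract s.M S)).coeff 5
      = (P (KLPaper.contract s.M S)).coeff 5 + 1 := by
    rw [hZ']; simp [Polynomial.coeff_X_pow, Polynomial.coeff_X, Polynomial.coeff_one]
  have hpal0 := (hPZ.2.2.1 (KLPaper.contract s.M S)).2 0 (Nat.zero_le _)
  rw [hrankN, Nat.sub_zero, e0, e5] at hpal0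
  have hpal1 := (hPZ.2.2.1 (KLPaper.contract s.M S)).2 1 (by rw [hrankN]; omega)
  rw [hrankN, show (5 : ℕ) - 1 = 4 from rfl, e1, e4] at hpal1
  have hpal2 := (hPZ.2.2.1 (KLPaper.contract s.M S)).2 2 (by rw [hrankN]; omega)
  rw [hrankN, show (5 : ℕ) - 2 = 3 from rfl, e2, e3] at hpal2
  rcases hPZ.2.1 (KLPaper.contract s.M S) (contract_ground_ne s hS (by omega)) with h | hdeg
  · rw [h] at hpal0; simp at hpal0
  · rw [hrankN] at hdeg
    have hd : (P (KLPaper.contract s.M S)).natDegree ≤ 2 := by omega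
    have hc3 : (P (KLPaper.contract s.M S)).coeff 3 = 0 :=
      Polynomial.coeff_eq_zero_of_natDegree_lt (by omega)
    have hc4 : (P (KLPaper.contract s.M S)).coeff 4 = 0 :=
      Polynomial.coeff_eq_zero_of_natDegree_lt (by omega)
    have hc5 : (P (KLPaper.contract s.M S)).coeff 5 = 0 :=
      Polynomial.coeff_eq_zero_of_natDegree_lt (by omega)
    have hc0 : (P (KLPaper.contract s.M S)).coeff 0 = 1 := by rw [hc5] at hpal0; linarith
    have hc1 : (P (KLPaper.contract s.M S)).coeff 1 = 55 := by rw [hc4] at hpal1; linarith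
    have hc2 : (P (KLPaper.contract s.M S)).coeff 2 = 55 := by rw [hc3] at hpal2; linarith
    rw [poly_rep2 hd, hc0, hc1, hc2]
    simp

/-- Case `S = ∅` : `P M = 1 + 120t + 429t²`. -/
lemma P_contract_empty' (hPZ : PZaxioms P Z) :
    P (KLPaper.contract s.M (∅ : Set β)) = 1 + C 120 * X + C 429 * X ^ 2 := by
  have hS : (∅ : Set β) ⊆ s.E := Set.empty_subset _
  have h0 : (∅ : Set β).ncard = 0 := Set.ncard_empty β
  have hrkS : KLPaper.rk s.M (∅ : Set β) = 0 := KLPaper.rk_empty s.M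
  have hrankN : KLPaper.rank (KLPaper.contract s.M (∅ : Set β)) = 6 := by
    have := rank_contract_eq s hS; omega
  have hZ := Z_eq s hPZ hS
  rw [Finset.powerset_card_biUnion,
    Finset.sum_biUnion ((Finset.pairwise_disjoint_powersetCard _).set_pairwise _),
    card_EdiffS' s hS h0 (by norm_num : 12 - 0 = 12)] at hZ
  simp only [Finset.sum_range_succ, Finset.sum_range_zero, zero_add] at hZ
  rw [sum_pc_zero s ∅ 0 rfl,
    sum_pc_val s hPZ hS (q := 1 + C 55 * X + C 55 * X ^ 2) (m := 12) h0 (by norm_num : 0 + 1 ≤ 5)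
      (fun U hU hc => P_contract_one s hPZ hU (by omega)) (by decide),
    sum_pc_val s hPZ hS (q := 1 + C 20 * X) (m := 66) h0 (by norm_num : 0 + 2 ≤ 5)
      (fun U hU hc => P_contract_two s hPZ hU (by omega)) (by decide),
    sum_pc_val s hPZ hS (q := 1 + C 3 * X) (m := 220) h0 (by norm_num : 0 + 3 ≤ 5)
      (fun U hU hc => P_contract_three s hPZ hU (by omega)) (by decide),
    sum_pc_val s hPZ hS (q := 1) (m := 495) h0 (by norm_num : 0 + 4 ≤ 5)
      (fun U hU hc => P_contract_four s hPZ hU (by omega)) (by decide),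
    sum_pc_val s hPZ hS (q := 0) (m := 792) h0 (by norm_num : 0 + 5 ≤ 5)
      (fun U hU hc => P_contract_five s hPZ hU (by omega)) (by decide),
    sum_pc_six s hPZ hS (lam := 132) h0 (by norm_num) (by norm_num : 5 + 0 = 5)
      (s.ncard_blocksThrough hS h0 (by norm_num) (by decide) (by decide)),
    sum_pc_mid0 s hPZ hS h0 (by norm_num : 7 ≤ 0 + 7) (by norm_num),
    sum_pc_mid0 s hPZ hS h0 (by norm_num : 7 ≤ 0 + 8) (by norm_num),
    sum_pc_mid0 s hPZ hS h0 (by norm_num : 7 ≤ 0 + 9) (by norm_num),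
    sum_pc_mid0 s hPZ hS h0 (by norm_num : 7 ≤ 0 + 10) (by norm_num),
    sum_pc_mid0 s hPZ hS h0 (by norm_num : 7 ≤ 0 + 11) (by norm_num),
    sum_pc_top s hPZ hS h0 (by norm_num) hrkS (by norm_num : 0 + 6 = 6)] at hZ
  have hZ' : Z (KLPaper.contract s.M (∅ : Set β)) = P (KLPaper.contract s.M (∅ : Set β))
      + C 12 * X + C 726 * X ^ 2 + C 2200 * X ^ 3 + C 1155 * X ^ 4 + C 132 * X ^ 5
      + X ^ 6 := by
    rw [hZ]; simp only [map_ofNat]; ring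
  have e0 : (Z (KLPaper.contract s.M (∅ : Set β))).coeff 0
      = (P (KLPaper.contract s.M (∅ : Set β))).coeff 0 := by
    rw [hZ']; simp [Polynomial.coeff_X_pow, Polynomial.coeff_X, Polynomial.coeff_one]
  have e1 : (Z (KLPaper.contract s.M (∅ : Set β))).coeff 1
      = (P (KLPaper.contract s.M (∅ : Set β))).coeff 1 + 12 := by
    rw [hZ']; simp [Polynomial.coeff_X_pow, Polynomial.coeff_X, Polynomial.coeff_one]
  have e2 : (Z (KLPaper.contract s.M (∅ : Set β))).coeff 2
      = (P (KLPaper.contract s.M (∅ : Set β))).coeff 2 + 726 := by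
    rw [hZ']; simp [Polynomial.coeff_X_pow, Polynomial.coeff_X, Polynomial.coeff_one]
  have e4 : (Z (KLPaper.contract s.M (∅ : Set β))).coeff 4
      = (P (KLPaper.contract s.M (∅ : Set β))).coeff 4 + 1155 := by
    rw [hZ']; simp [Polynomial.coeff_X_pow, Polynomial.coeff_X, Polynomial.coeff_one]
  have e5 : (Z (KLPaper.contract s.M (∅ : Set β))).coeff 5
      = (P (KLPaper.contract s.M (∅ : Set β))).coeff 5 + 132 := by
    rw [hZ']; simp [Polynomial.coeff_X_pow, Polynomial.coeff_X, Polynomial.coeff_one]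
  have e6 : (Z (KLPaper.contract s.M (∅ : Set β))).coeff 6
      = (P (KLPaper.contract s.M (∅ : Set β))).coeff 6 + 1 := by
    rw [hZ']; simp [Polynomial.coeff_X_pow, Polynomial.coeff_X, Polynomial.coeff_one]
  have hpal0 := (hPZ.2.2.1 (KLPaper.contract s.M (∅ : Set β))).2 0 (Nat.zero_le _)
  rw [hrankN, Nat.sub_zero, e0, e6] at hpal0
  have hpal1 := (hPZ.2.2.1 (KLPaper.contract s.M (∅ : Set β))).2 1 (by rw [hrankN]; omega)
  rw [hrankN, show (6 : ℕ) - 1 = 5 from rfl, e1, e5] at hpal1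
  have hpal2 := (hPZ.2.2.1 (KLPaper.contract s.M (∅ : Set β))).2 2 (by rw [hrankN]; omega)
  rw [hrankN, show (6 : ℕ) - 2 = 4 from rfl, e2, e4] at hpal2
  have hne : (KLPaper.contract s.M (∅ : Set β)).E ≠ ∅ :=
    contract_ground_ne s hS (by rw [h0]; omega)
  rcases hPZ.2.1 (KLPaper.contract s.M (∅ : Set β)) hne with h | hdeg
  · rw [h] at hpal0; simp at hpal0
  · rw [hrankN] at hdeg
    have hd : (P (KLPaper.contract s.M (∅ : Set β))).natDegree ≤ 2 := by omega
    have hc4 : (P (KLPaper.contract s.M (∅ : Set β))).coeff 4 = 0 :=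
      Polynomial.coeff_eq_zero_of_natDegree_lt (by omega)
    have hc5 : (P (KLPaper.contract s.M (∅ : Set β))).coeff 5 = 0 :=
      Polynomial.coeff_eq_zero_of_natDegree_lt (by omega)
    have hc6 : (P (KLPaper.contract s.M (∅ : Set β))).coeff 6 = 0 :=
      Polynomial.coeff_eq_zero_of_natDegree_lt (by omega)
    have hc0 : (P (KLPaper.contract s.M (∅ : Set β))).coeff 0 = 1 := by
      rw [hc6] at hpal0; linarith
    have hc1 : (P (KLPaper.contract s.M (∅ : Set β))).coeff 1 = 120 := by
      rw [hc5] at hpal1; linarith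
    have hc2 : (P (KLPaper.contract s.M (∅ : Set β))).coeff 2 = 429 := by
      rw [hc4] at hpal2; linarith
    rw [poly_rep2 hd, hc0, hc1, hc2]
    simp

end St2

namespace KLPaper

/-- Let `(E, ℋ)` be a Steiner system of type `(5,6,12)`: `|E| = 12`,
every block `Bl ∈ ℋ` is a `6`-element subset of `E`, and every `5`-element subset of
`E` is contained in exactly one block.  Let `M` be its associated matroid of rank `6`,
whose bases are the `6`-element subsets of `E` contained in no block.  Then
`P_M(t) = 1 + 120t + 429t²`. -/
theorem steiner_5_6_12_KL_polynomial {β : Type} [Fintype β]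
    (P Z : Matroid β → Polynomial ℤ) (hPZ : PZaxioms P Z)
    (E : Set β) (Blocks : Set (Set β))
    (hEcard : E.ncard = 12)
    (hBlocks : ∀ Bl ∈ Blocks, Bl ⊆ E ∧ Bl.ncard = 6)
    (hSteiner : ∀ D ⊆ E, D.ncard = 5 → ∃! Bl, Bl ∈ Blocks ∧ D ⊆ Bl)
    (M : Matroid β) (hME : M.E = E)
    (hMB : ∀ B : Set β, M.IsBase B ↔ B ⊆ E ∧ B.ncard = 6 ∧ ∀ Bl ∈ Blocks, ¬B ⊆ Bl) :
    P M = 1 + C 120 * X + C 429 * X ^ 2 := by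
  have h := St2.P_contract_empty'
    (⟨E, Blocks, M, hEcard, hBlocks, hSteiner, hME, hMB⟩ : St β) hPZ
  rwa [KLPaper.contract_empty] at h

end KLPaper
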